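/- Let n, k ≥ 1, let L ≥ 1 be an integer, let a, b : {1,…,n} → ℤ² be sequences of points such that the multiset T has at most k distinct points, and let σ be any permutation of {1,…,n}. If v is chosen uniformly at random from {0,…,L−1}², then the probability that there exists i with ‖a(i) − b(σ(i))‖₁ < L/(8k) and cell_{L,v}(a(i)) ≠ cell_{L,v}(b(σ(i))) is at most 1/2. -/

import Mathlib

/-- ℓ1 norm on ℤ². -/
def l1 (p : ℤ × ℤ) : ℤ := |p.1| + |p.2|

/-- Earth-mover distance between the multisets {a 1,…,a n} and {b 1,…,b n}:
the minimum over permutations σ of ∑ i, ‖a i − b (σ i)‖₁. -/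
noncomputable def EMD {n : ℕ} (a b : Fin n → ℤ × ℤ) : ℤ :=
  Finset.univ.inf' Finset.univ_nonempty
    (fun σ : Equiv.Perm (Fin n) => ∑ i, l1 (a i - b (σ i)))

/-- The grid cell of a point p for the grid of cell size L shifted by v
(floor division; `/` on ℤ with positive divisor is floor division). -/
def cell (L : ℕ) (v p : ℤ × ℤ) : ℤ × ℤ :=
  ((p.1 - v.1) / (L : ℤ), (p.2 - v.2) / (L : ℤ))

/-- If two points land in different cells (in 1D), there is a grid boundary
strictly between them (half-open). -/
lemma between_of_ediv_lt {L : ℤ} (hL : 0 < L) {x y v : ℤ}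
    (h : (x - v) / L < (y - v) / L) :
    x < ((y - v) / L) * L + v ∧ ((y - v) / L) * L + v ≤ y := by
  have hx := Int.mul_ediv_add_emod (x - v) L
  have hy := Int.mul_ediv_add_emod (y - v) L
  have hx1 := Int.emod_nonneg (x - v) hL.ne'
  have hx2 := Int.emod_lt_of_pos (x - v) hL
  have hy1 := Int.emod_nonneg (y - v) hL.ne'
  have h1 : (x - v) / L + 1 ≤ (y - v) / L := h
  have h2 : L * ((x - v) / L + 1) ≤ L * ((y - v) / L) :=
    mul_le_mul_of_nonneg_left h1 hL.le
  constructor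
  · nlinarith
  · nlinarith

/-- If the 1D cells of x and y differ, some grid boundary point (≡ v mod L)
lies in (min x y, max x y]. -/
lemma split_boundary {L : ℤ} (hL : 0 < L) {x y v : ℤ}
    (h : (x - v) / L ≠ (y - v) / L) :
    ∃ m : ℤ, min x y < m * L + v ∧ m * L + v ≤ max x y := by
  rcases h.lt_or_gt with hlt | hlt
  · obtain ⟨h1, h2⟩ := between_of_ediv_lt hL hlt
    exact ⟨(y - v) / L, lt_of_le_of_lt (min_le_left x y) h1,
      le_trans h2 (le_max_right x y)⟩
  · obtain ⟨h1, h2⟩ := between_of_ediv_lt hL hlt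
    exact ⟨(x - v) / L, lt_of_le_of_lt (min_le_right x y) h1,
      le_trans h2 (le_max_left x y)⟩

open scoped Classical

/-- Counting residues in [0,L) hit by an interval of length 2D. -/
lemma card_badres {L : ℤ} (hL : 0 < L) (c D : ℤ) (hD : 0 ≤ D) :
    (((Finset.Ico (0 : ℤ) L).filter
      (fun w => ∃ m : ℤ, c - D < m * L + w ∧ m * L + w ≤ c + D)).card : ℤ)
      ≤ 2 * D := by
  classical
  set s := (Finset.Ico (0 : ℤ) L).filter
      (fun w => ∃ m : ℤ, c - D < m * L + w ∧ m * L + w ≤ c + D) with hs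
  have key : s.card ≤ (Finset.Ioc (c - D) (c + D)).card := by
    apply Finset.card_le_card_of_injOn
      (fun w => if h : ∃ m : ℤ, c - D < m * L + w ∧ m * L + w ≤ c + D then
        (Classical.choose h) * L + w else 0)
    · intro w hw
      simp only [Finset.mem_coe, hs, Finset.mem_filter] at hw
      obtain ⟨hw1, hex⟩ := hw
      simp only [dif_pos hex]
      have := Classical.choose_spec hex
      exact Finset.mem_Ioc.mpr ⟨this.1, this.2⟩
    · intro w1 hw1 w2 hw2 heq
      simp only [Finset.mem_coe, hs, Finset.mem_filter, Finset.mem_Ico] at hw1 hw2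
      obtain ⟨⟨hw1a, hw1b⟩, hex1⟩ := hw1
      obtain ⟨⟨hw2a, hw2b⟩, hex2⟩ := hw2
      simp only [dif_pos hex1, dif_pos hex2] at heq
      have e1 : ((Classical.choose hex1) * L + w1) % L = w1 := by
        rw [add_comm, mul_comm, Int.add_mul_emod_self_left, Int.emod_eq_of_lt hw1a hw1b]
      have e2 : ((Classical.choose hex2) * L + w2) % L = w2 := by
        rw [add_comm, mul_comm, Int.add_mul_emod_self_left, Int.emod_eq_of_lt hw2a hw2b]
      rw [← e1, ← e2, heq]
  have hcard : (Finset.Ioc (c - D) (c + D)).card = (2 * D).toNat := by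
    rw [Int.card_Ioc]; ring_nf
  rw [hcard] at key
  calc (s.card : ℤ) ≤ ((2 * D).toNat : ℤ) := by exact_mod_cast key
    _ = 2 * D := Int.toNat_of_nonneg (by linarith)

open scoped Classical in
/-- if T has at most k distinct points, then for v uniform on
{0,…,L−1}², the probability that some matched pair at ℓ1 distance < L/(8k) is
split by the grid (L,v) is at most 1/2. -/
theorem good_grid_probability (n k : ℕ) (hn : 1 ≤ n) (hk : 1 ≤ k)
    (L : ℕ) (hL : 1 ≤ L) (a b : Fin n → ℤ × ℤ)
    (hT : (Finset.univ.image b).card ≤ k) (σ : Equiv.Perm (Fin n)) :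
    (((Finset.Ico (0 : ℤ) (L : ℤ) ×ˢ Finset.Ico (0 : ℤ) (L : ℤ)).filter fun v =>
        ∃ i, (l1 (a i - b (σ i)) : ℝ) < (L : ℝ) / (8 * k) ∧
          cell L v (a i) ≠ cell L v (b (σ i))).card : ℝ) /
      ((Finset.Ico (0 : ℤ) (L : ℤ) ×ˢ Finset.Ico (0 : ℤ) (L : ℤ)).card : ℝ) ≤
      1 / 2 := by
  have hLZ : (0 : ℤ) < (L : ℤ) := by exact_mod_cast hL
  have hkZ : (0 : ℤ) < 8 * (k : ℤ) := by positivity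
  set LZ : ℤ := (L : ℤ) with hLZdef
  set D : ℤ := (LZ - 1) / (8 * (k : ℤ)) with hDdef
  have hD0 : 0 ≤ D := Int.ediv_nonneg (by linarith) (by positivity)
  have hD1 : 8 * (k : ℤ) * D ≤ LZ - 1 := by
    have := (Int.le_ediv_iff_mul_le hkZ (a := D) (b := LZ - 1)).mp le_rfl
    linarith
  set grid := Finset.Ico (0 : ℤ) LZ ×ˢ Finset.Ico (0 : ℤ) LZ with hgrid
  set S := grid.filter fun v =>
        ∃ i, (l1 (a i - b (σ i)) : ℝ) < (L : ℝ) / (8 * k) ∧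
          cell L v (a i) ≠ cell L v (b (σ i)) with hS
  -- bad sets
  set Bad1 : ℤ × ℤ → Finset (ℤ × ℤ) := fun q => grid.filter
    (fun v => ∃ m : ℤ, q.1 - D < m * LZ + v.1 ∧ m * LZ + v.1 ≤ q.1 + D) with hBad1
  set Bad2 : ℤ × ℤ → Finset (ℤ × ℤ) := fun q => grid.filter
    (fun v => ∃ m : ℤ, q.2 - D < m * LZ + v.2 ∧ m * LZ + v.2 ≤ q.2 + D) with hBad2
  -- the bad event is covered
  have hsub : S ⊆ (Finset.univ.image b).biUnion (fun q => Bad1 q ∪ Bad2 q) := by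
    intro v hv
    rw [hS, Finset.mem_filter] at hv
    obtain ⟨hvg, i, hdist, hcell⟩ := hv
    set q := b (σ i) with hq
    set d := l1 (a i - q) with hd
    have hd0 : 0 ≤ d := add_nonneg (abs_nonneg _) (abs_nonneg _)
    have hdD : d ≤ D := by
      have h8 : (0 : ℝ) < 8 * (k : ℝ) := by positivity
      have : (d : ℝ) * (8 * (k : ℝ)) < (L : ℝ) := by
        rw [← lt_div_iff₀ h8]; exact_mod_cast hdist
      have hZ : d * (8 * (k : ℤ)) < LZ := by exact_mod_cast this
      rw [hDdef]
      exact (Int.le_ediv_iff_mul_le hkZ).mpr (by linarith)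
    have habs1 : |(a i).1 - q.1| ≤ d := by
      rw [hd]; unfold l1
      have : (a i - q).1 = (a i).1 - q.1 := rfl
      rw [← this]
      exact le_add_of_nonneg_right (abs_nonneg _)
    have habs2 : |(a i).2 - q.2| ≤ d := by
      rw [hd]; unfold l1
      have : (a i - q).2 = (a i).2 - q.2 := rfl
      rw [← this]
      exact le_add_of_nonneg_left (abs_nonneg _)
    rw [Finset.mem_biUnion]
    refine ⟨q, Finset.mem_image.mpr ⟨σ i, Finset.mem_univ _, rfl⟩, ?_⟩
    -- which coordinate is split?
    have hcell' : ((a i).1 - v.1) / LZ ≠ (q.1 - v.1) / LZ ∨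
        ((a i).2 - v.2) / LZ ≠ (q.2 - v.2) / LZ := by
      by_contra hcon
      push_neg at hcon
      exact hcell (Prod.ext hcon.1 hcon.2)
    rw [Finset.mem_union]
    rcases hcell' with hne | hne
    · left
      rw [hBad1, Finset.mem_filter]
      refine ⟨hvg, ?_⟩
      obtain ⟨m, hm1, hm2⟩ := split_boundary hLZ hne
      refine ⟨m, ?_, ?_⟩
      · have := abs_le.mp habs1
        have hmin : q.1 - d ≤ min (a i).1 q.1 := le_min (by linarith [this.2]) (by linarith)
        linarith
      · have := abs_le.mp habs1
        have hmax : max (a i).1 q.1 ≤ q.1 + d := max_le (by linarith [this.1]) (by linarith)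
        linarith
    · right
      rw [hBad2, Finset.mem_filter]
      refine ⟨hvg, ?_⟩
      obtain ⟨m, hm1, hm2⟩ := split_boundary hLZ hne
      refine ⟨m, ?_, ?_⟩
      · have := abs_le.mp habs2
        have hmin : q.2 - d ≤ min (a i).2 q.2 := le_min (by linarith [this.2]) (by linarith)
        linarith
      · have := abs_le.mp habs2
        have hmax : max (a i).2 q.2 ≤ q.2 + d := max_le (by linarith [this.1]) (by linarith)
        linarith
  -- cardinality of each bad set
  have hIcoCard : (Finset.Ico (0 : ℤ) LZ).card = L := by
    rw [Int.card_Ico]; simp [hLZdef]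
  have hBadCard : ∀ q : ℤ × ℤ, ((Bad1 q ∪ Bad2 q).card : ℤ) ≤ 2 * (2 * D) * L := by
    intro q
    set F1 := (Finset.Ico (0 : ℤ) LZ).filter
        (fun w => ∃ m : ℤ, q.1 - D < m * LZ + w ∧ m * LZ + w ≤ q.1 + D) with hF1
    set F2 := (Finset.Ico (0 : ℤ) LZ).filter
        (fun w => ∃ m : ℤ, q.2 - D < m * LZ + w ∧ m * LZ + w ≤ q.2 + D) with hF2
    have h1 : (Bad1 q).card ≤ F1.card * L := by
      have hsub1 : Bad1 q ⊆ F1 ×ˢ Finset.Ico (0 : ℤ) LZ := by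
        intro v hv
        rw [hBad1, Finset.mem_filter, hgrid, Finset.mem_product] at hv
        rw [Finset.mem_product, hF1, Finset.mem_filter]
        exact ⟨⟨hv.1.1, hv.2⟩, hv.1.2⟩
      calc (Bad1 q).card ≤ _ := Finset.card_le_card hsub1
        _ = _ := by rw [Finset.card_product, hIcoCard]
    have h2 : (Bad2 q).card ≤ F2.card * L := by
      have hsub2 : Bad2 q ⊆ Finset.Ico (0 : ℤ) LZ ×ˢ F2 := by
        intro v hv
        rw [hBad2, Finset.mem_filter, hgrid, Finset.mem_product] at hv
        rw [Finset.mem_product, hF2, Finset.mem_filter]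
        exact ⟨hv.1.1, hv.1.2, hv.2⟩
      calc (Bad2 q).card ≤ _ := Finset.card_le_card hsub2
        _ = _ := by rw [Finset.card_product, hIcoCard, mul_comm]
    have hc1 : (F1.card : ℤ) ≤ 2 * D := card_badres hLZ q.1 D hD0
    have hc2 : (F2.card : ℤ) ≤ 2 * D := card_badres hLZ q.2 D hD0
    have hun := Finset.card_union_le (Bad1 q) (Bad2 q)
    have hLnn : (0 : ℤ) ≤ (L : ℤ) := by positivity
    have h1' : ((Bad1 q).card : ℤ) ≤ 2 * D * L := by
      have ha : ((Bad1 q).card : ℤ) ≤ (F1.card : ℤ) * (L : ℤ) := by exact_mod_cast h1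
      have hb := mul_le_mul_of_nonneg_right hc1 hLnn
      linarith
    have h2' : ((Bad2 q).card : ℤ) ≤ 2 * D * L := by
      have ha : ((Bad2 q).card : ℤ) ≤ (F2.card : ℤ) * (L : ℤ) := by exact_mod_cast h2
      have hb := mul_le_mul_of_nonneg_right hc2 hLnn
      linarith
    have hun' : ((Bad1 q ∪ Bad2 q).card : ℤ) ≤ ((Bad1 q).card : ℤ) + ((Bad2 q).card : ℤ) := by
      exact_mod_cast hun
    linarith
  -- total cardinality bound
  have hScard : (S.card : ℤ) ≤ (k : ℤ) * (2 * (2 * D) * L) := by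
    have h1 : S.card ≤ ((Finset.univ.image b).biUnion (fun q => Bad1 q ∪ Bad2 q)).card :=
      Finset.card_le_card hsub
    have h2 := Finset.card_biUnion_le (s := Finset.univ.image b)
      (t := fun q => Bad1 q ∪ Bad2 q)
    have h12 : (S.card : ℤ) ≤
        ((∑ q ∈ Finset.univ.image b, (Bad1 q ∪ Bad2 q).card : ℕ) : ℤ) := by
      exact_mod_cast h1.trans h2
    have h3 : ((∑ q ∈ Finset.univ.image b, (Bad1 q ∪ Bad2 q).card : ℕ) : ℤ)
        ≤ ((Finset.univ.image b).card : ℤ) * (2 * (2 * D) * L) := by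
      push_cast
      calc (∑ q ∈ Finset.univ.image b, ((Bad1 q ∪ Bad2 q).card : ℤ))
          ≤ ∑ _q ∈ Finset.univ.image b, 2 * (2 * D) * (L : ℤ) :=
            Finset.sum_le_sum (fun q _ => hBadCard q)
        _ = ((Finset.univ.image b).card : ℤ) * (2 * (2 * D) * L) := by
            rw [Finset.sum_const, nsmul_eq_mul]
    have h4 : ((Finset.univ.image b).card : ℤ) ≤ (k : ℤ) := by exact_mod_cast hT
    have hnn : (0 : ℤ) ≤ 2 * (2 * D) * L := by positivity
    calc (S.card : ℤ) ≤ _ := h12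
      _ ≤ _ := h3
      _ ≤ (k : ℤ) * (2 * (2 * D) * L) := mul_le_mul_of_nonneg_right h4 hnn
  -- grid cardinality
  have hgridCard : (grid.card : ℤ) = LZ * LZ := by
    rw [hgrid, Finset.card_product, hIcoCard]
    push_cast [hLZdef]
    ring
  have hgridPos : (0 : ℝ) < (grid.card : ℝ) := by
    have : (0 : ℤ) < (grid.card : ℤ) := by rw [hgridCard]; positivity
    exact_mod_cast this
  -- final arithmetic
  have hkey : 2 * (S.card : ℤ) ≤ (grid.card : ℤ) := by
    rw [hgridCard]
    have : 2 * ((k : ℤ) * (2 * (2 * D) * L)) = (8 * (k : ℤ) * D) * LZ := by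
      rw [hLZdef]; ring
    nlinarith [hD1, hLZ.le, hScard]
  rw [div_le_div_iff₀ hgridPos (by norm_num : (0:ℝ) < 2)]
  have : ((S.card : ℤ) : ℝ) * 2 ≤ ((grid.card : ℤ) : ℝ) := by
    exact_mod_cast (by linarith : (S.card : ℤ) * 2 ≤ (grid.card : ℤ))
  calc (S.card : ℝ) * 2 ≤ (grid.card : ℝ) := by exact_mod_cast this
    _ = 1 * (grid.card : ℝ) := (one_mul _).symm
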